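/- Let μ be the measure on a Euclidean space a given by dμ(x) = δ(x) dx with δ(x) = ∏_{α∈R⁺} |sinh((α,x)/2)|^{2k(α)}, where k(α) > 0 for all α in the finite set R⁺ of nonzero vectors. Then for every A > 0 and every α ∈ R⁺, the function x ↦ coth((α,x)/2) is μ-integrable on the set {x ∈ closure(a₊) : |x| ≤ A}, where a₊ = {x : (β,x) > 0 ∀β ∈ R⁺}. -/

import Mathlib

open MeasureTheory

lemma measurable_rpow_const' {α : Type*} [MeasurableSpace α] {f : α → ℝ} (hf : Measurable f)
    (h0 : ∀ x, 0 ≤ f x) (q : ℝ) : Measurable fun x => f x ^ q := by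
  have he : (fun x => f x ^ q)
      = fun x => if f x = 0 then (if q = 0 then 1 else 0) else Real.exp (Real.log (f x) * q) :=
    funext fun x => Real.rpow_def_of_nonneg (h0 x) q
  rw [he]
  exact Measurable.ite (hf (measurableSet_singleton 0)) measurable_const
    (Real.measurable_exp.comp ((Real.measurable_log.comp hf).mul_const q))

lemma abs_le_abs_sinh' (t : ℝ) : |t| ≤ |Real.sinh t| := by
  rw [Real.abs_sinh]
  rcases eq_or_lt_of_le (abs_nonneg t) with h | h
  · simp [← h]
  · exact (Real.self_lt_sinh_iff.2 h).le

lemma integrableOn_abs_rpow_Icc' {q C : ℝ} (hq : -1 < q) (hC : 0 < C) :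
    IntegrableOn (fun t : ℝ => |t| ^ q) (Set.Icc (-C) C) := by
  have h1 : IntegrableOn (fun t : ℝ => |t| ^ q) (Set.Ioo 0 C) := by
    refine ((intervalIntegral.integrableOn_Ioo_rpow_iff hC).2 hq).congr_fun (fun t ht => ?_) measurableSet_Ioo
    rw [abs_of_pos ht.1]
  have h2 : IntegrableOn (fun t : ℝ => |t| ^ q) (Set.Ioo (-C) 0) := by
    have hset : Set.Ioo (-C) (0:ℝ) = (fun t : ℝ => -t) ⁻¹' Set.Ioo 0 C := by
      ext t
      simp only [Set.mem_Ioo, Set.mem_preimage]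
      constructor
      · rintro ⟨h₁, h₂⟩; constructor <;> linarith
      · rintro ⟨h₁, h₂⟩; constructor <;> linarith
    rw [hset]
    have := (MeasurePreserving.integrableOn_comp_preimage
      (Measure.measurePreserving_neg (volume : Measure ℝ))
      (Homeomorph.neg ℝ).measurableEmbedding).2 h1
    refine this.congr_fun (fun t _ => ?_) (measurableSet_Ioo.preimage measurable_neg)
    simp [Function.comp, abs_neg]
  have e1 : IntegrableOn (fun t : ℝ => |t| ^ q) (Set.Icc 0 C) :=
    (integrableOn_Icc_iff_integrableOn_Ioo).2 h1
  have e2 : IntegrableOn (fun t : ℝ => |t| ^ q) (Set.Icc (-C) 0) :=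
    (integrableOn_Icc_iff_integrableOn_Ioo).2 h2
  have : Set.Icc (-C) C = Set.Icc (-C) 0 ∪ Set.Icc 0 C :=
    (Set.Icc_union_Icc_eq_Icc (by linarith) (by linarith)).symm
  rw [this]
  exact e2.union e1

lemma integrableOn_abs_sinh_rpow' {q c C : ℝ} (hq : -1 < q) (hc : 0 < c) (hC : 0 < C) :
    IntegrableOn (fun t : ℝ => |Real.sinh (c * t / 2)| ^ q) (Set.Icc (-C) C) := by
  rcases le_or_gt 0 q with hq0 | hq0
  · apply Continuous.integrableOn_Icc
    exact (Real.continuous_sinh.comp (by continuity)).abs.rpow_const (fun x => Or.inr hq0)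
  · have hmeas : AEStronglyMeasurable (fun t : ℝ => |Real.sinh (c * t / 2)| ^ q)
        (volume.restrict (Set.Icc (-C) C)) := by
      apply Measurable.aestronglyMeasurable
      exact measurable_rpow_const' ((Real.continuous_sinh.comp (by continuity : Continuous fun t : ℝ => c * t / 2)).measurable.abs) (fun _ => abs_nonneg _) q
    refine Integrable.mono ((integrableOn_abs_rpow_Icc' hq hC).const_mul ((c/2) ^ q)) hmeas
      (ae_of_all _ fun t => ?_)
    have h1 : |c * t / 2| = c / 2 * |t| := by
      rw [abs_div, abs_mul, abs_of_pos hc, abs_two]; ring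
    have key : |Real.sinh (c * t / 2)| ^ q ≤ (c / 2) ^ q * |t| ^ q := by
      rw [← Real.mul_rpow (by positivity) (abs_nonneg t), ← h1]
      rcases eq_or_ne (c * t / 2) 0 with h0 | h0
      · simp [h0, Real.zero_rpow hq0.ne]
      · exact Real.rpow_le_rpow_of_nonpos (abs_pos.2 h0) (abs_le_abs_sinh' _) hq0.le
    calc ‖|Real.sinh (c * t / 2)| ^ q‖ = |Real.sinh (c * t / 2)| ^ q := by
          rw [Real.norm_eq_abs, abs_of_nonneg (Real.rpow_nonneg (abs_nonneg _) q)]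
      _ ≤ (c / 2) ^ q * |t| ^ q := key
      _ ≤ ‖(c / 2) ^ q * |t| ^ q‖ := le_abs_self _

open scoped RealInnerProductSpace

lemma key' {n : ℕ} {q A : ℝ} (hq : -1 < q) (hA : 0 < A)
    {α : EuclideanSpace ℝ (Fin n)} (hα : α ≠ 0) :
    IntegrableOn (fun x : EuclideanSpace ℝ (Fin n) => |Real.sinh (⟪α, x⟫ / 2)| ^ q)
      {x : EuclideanSpace ℝ (Fin n) | ‖x‖ ≤ A} volume := by
  have hc : 0 < ‖α‖ := norm_pos_iff.2 hα
  have hn : 0 < n := by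
    rcases Nat.eq_zero_or_pos n with h | h
    · subst h
      exact absurd (Subsingleton.elim α 0) hα
    · exact h
  set i0 : Fin n := ⟨0, hn⟩
  set u : EuclideanSpace ℝ (Fin n) := ‖α‖⁻¹ • α with hu_def
  have hu_norm : ‖u‖ = 1 := by
    rw [hu_def, norm_smul, norm_inv, norm_norm, inv_mul_cancel₀ hc.ne']
  have hortho : Orthonormal ℝ (Set.restrict {i0} (fun _ : Fin n => u)) := by
    rw [orthonormal_iff_ite]
    intro i j
    have h1 : (i : Fin n) = i0 := i.2
    have h2 : (j : Fin n) = i0 := j.2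
    have hij : i = j := Subtype.ext (h1.trans h2.symm)
    rw [if_pos hij]
    show ⟪u, u⟫ = (1:ℝ)
    rw [real_inner_self_eq_norm_sq, hu_norm]
    norm_num
  obtain ⟨b, hb⟩ := Orthonormal.exists_orthonormalBasis_extension_of_card_eq
    (by simp [finrank_euclideanSpace]) hortho
  have hb0 : b i0 = u := hb i0 rfl
  have hrepr : ∀ x, ⟪α, x⟫ = ‖α‖ * b.repr x i0 := by
    intro x
    rw [b.repr_apply_apply, hb0, hu_def, real_inner_smul_left]
    field_simp
  -- Step 1 : integrability on the Pi type
  have hPi : IntegrableOn (fun z : Fin n → ℝ => |Real.sinh (‖α‖ * z i0 / 2)| ^ q)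
      (Set.univ.pi fun _ => Set.Icc (-A) A) volume := by
    refine (integrable_indicator_iff (MeasurableSet.univ_pi fun _ => measurableSet_Icc)).1 ?_
    have heq : (Set.univ.pi fun _ : Fin n => Set.Icc (-A) A).indicator
        (fun z : Fin n → ℝ => |Real.sinh (‖α‖ * z i0 / 2)| ^ q)
        = fun z : Fin n → ℝ => ∏ i,
          (Set.Icc (-A) A).indicator
            (fun t => if i = i0 then |Real.sinh (‖α‖ * t / 2)| ^ q else 1) (z i) := by
      funext z
      by_cases hz : z ∈ Set.univ.pi fun _ : Fin n => Set.Icc (-A) A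
      · rw [Set.indicator_of_mem hz]
        have hzi : ∀ i, z i ∈ Set.Icc (-A) A := fun i => hz i (Set.mem_univ i)
        rw [Finset.prod_congr rfl (fun i _ => Set.indicator_of_mem (hzi i) _)]
        symm
        rw [Finset.prod_eq_single i0 (fun i _ hi => if_neg hi)
          (fun h => absurd (Finset.mem_univ i0) h), if_pos rfl]
      · rw [Set.indicator_of_notMem hz]
        rw [Set.mem_pi] at hz
        push_neg at hz
        obtain ⟨i, _, hi⟩ := hz
        refine (Finset.prod_eq_zero (Finset.mem_univ i) ?_).symm
        rw [Set.indicator_of_notMem hi]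
    rw [heq]
    refine Integrable.fintype_prod (𝕜 := ℝ) fun i => ?_
    by_cases hi : i = i0
    · subst hi
      simp only [if_pos rfl]
      exact (integrable_indicator_iff measurableSet_Icc).2
        (integrableOn_abs_sinh_rpow' hq hc hA)
    · simp only [if_neg hi]
      exact (integrable_indicator_iff measurableSet_Icc).2
        (integrableOn_const measure_Icc_lt_top.ne)
  -- Step 2 : transfer to EuclideanSpace
  have hE : IntegrableOn (fun y : EuclideanSpace ℝ (Fin n) => |Real.sinh (‖α‖ * y i0 / 2)| ^ q)
      {y : EuclideanSpace ℝ (Fin n) | ‖y‖ ≤ A} volume := by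
    have hmp := EuclideanSpace.volume_preserving_symm_measurableEquiv_toLp (Fin n)
    have hsub : {y : EuclideanSpace ℝ (Fin n) | ‖y‖ ≤ A} ⊆
        (MeasurableEquiv.toLp 2 (Fin n → ℝ)).symm ⁻¹' (Set.univ.pi fun _ => Set.Icc (-A) A) := by
      intro y hy
      intro i _
      have h1 : |y i| ≤ ‖y‖ := by
        rw [EuclideanSpace.norm_eq, ← Real.sqrt_sq_eq_abs]
        apply Real.sqrt_le_sqrt
        calc y i ^ 2 = ‖y i‖ ^ 2 := by rw [Real.norm_eq_abs, sq_abs]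
          _ ≤ ∑ j, ‖y j‖ ^ 2 := Finset.single_le_sum (f := fun j => ‖y j‖ ^ 2) (fun j _ => sq_nonneg _)
              (Finset.mem_univ i)
      have h2 : |y i| ≤ A := h1.trans hy
      exact Set.mem_Icc.2 (abs_le.1 h2)
    exact ((hmp.integrableOn_comp_preimage
      (MeasurableEquiv.toLp 2 (Fin n → ℝ)).symm.measurableEmbedding).2 hPi).mono_set hsub
  -- Step 3 : transfer along b.repr
  have hmp2 : MeasurePreserving (b.repr) volume volume := b.measurePreserving_repr
  have hsub2 : {x : EuclideanSpace ℝ (Fin n) | ‖x‖ ≤ A} =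
      b.repr ⁻¹' {y : EuclideanSpace ℝ (Fin n) | ‖y‖ ≤ A} := by
    ext x
    simp [b.repr.norm_map]
  have := (hmp2.integrableOn_comp_preimage
    (b.repr.toHomeomorph.measurableEmbedding)).2 hE
  rw [← hsub2] at this
  refine this.congr_fun (fun x _ => ?_) ?_
  · simp only [Function.comp_apply]
    rw [hrepr x]
  · rw [hsub2]
    exact (measurableSet_le (measurable_norm) measurable_const).preimage
      b.repr.toHomeomorph.measurable

set_option maxHeartbeats 1000000 in
theorem stmt_19 (n : ℕ)
    (Rplus : Finset (EuclideanSpace ℝ (Fin n)))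
    (hR0 : ∀ β ∈ Rplus, β ≠ 0)
    (k : EuclideanSpace ℝ (Fin n) → ℝ) (hk : ∀ β ∈ Rplus, 0 < k β)
    (δ : EuclideanSpace ℝ (Fin n) → ℝ)
    (hδ : ∀ x, δ x = ∏ β ∈ Rplus, |Real.sinh (⟪β, x⟫ / 2)| ^ (2 * k β))
    (α : EuclideanSpace ℝ (Fin n)) (hα : α ∈ Rplus) (A : ℝ) (hA : 0 < A) :
    IntegrableOn
      (fun x => (Real.cosh (⟪α, x⟫ / 2) / Real.sinh (⟪α, x⟫ / 2)) * δ x)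
      {x | (∀ β ∈ Rplus, 0 ≤ ⟪β, x⟫) ∧ ‖x‖ ≤ A} volume := by
  classical
  set q : ℝ := 2 * k α - 1 with hq_def
  have hq : -1 < q := by have := hk α hα; simp only [hq_def]; linarith
  have hα0 : α ≠ 0 := hR0 α hα
  -- the dominating constant
  set coshB : ℝ := Real.cosh (‖α‖ * A / 2) with hcoshB_def
  set prodB : ℝ := ∏ β ∈ Rplus.erase α, Real.sinh (‖β‖ * A / 2) ^ (2 * k β) with hprodB_def
  have hcoshB_pos : 0 < coshB := Real.cosh_pos _
  have hprodB_nonneg : 0 ≤ prodB :=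
    Finset.prod_nonneg fun β _ => Real.rpow_nonneg (by rw [← Real.sinh_zero]; exact Real.sinh_le_sinh.2 (by positivity)) _
  -- measurability of the set
  have hSmeas : MeasurableSet {x : EuclideanSpace ℝ (Fin n) |
      (∀ β ∈ Rplus, 0 ≤ ⟪β, x⟫) ∧ ‖x‖ ≤ A} := by
    have hrw : {x : EuclideanSpace ℝ (Fin n) | (∀ β ∈ Rplus, 0 ≤ ⟪β, x⟫) ∧ ‖x‖ ≤ A}
        = (⋂ β ∈ Rplus, {x : EuclideanSpace ℝ (Fin n) | 0 ≤ (⟪β, x⟫ : ℝ)})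
          ∩ {x : EuclideanSpace ℝ (Fin n) | ‖x‖ ≤ A} := by
      ext x; simp [Set.mem_iInter]
    rw [hrw]
    apply MeasurableSet.inter
    · refine MeasurableSet.biInter Rplus.countable_toSet fun β _ => ?_
      exact measurableSet_le measurable_const
        (Continuous.measurable (continuous_const.inner continuous_id))
    · exact measurableSet_le measurable_norm measurable_const
  -- the dominating function is integrable
  have hint : IntegrableOn
      (fun x : EuclideanSpace ℝ (Fin n) => coshB * prodB * |Real.sinh (⟪α, x⟫ / 2)| ^ q)
      {x : EuclideanSpace ℝ (Fin n) | (∀ β ∈ Rplus, 0 ≤ ⟪β, x⟫) ∧ ‖x‖ ≤ A} volume := by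
    exact IntegrableOn.mono_set ((key' hq hA hα0).const_mul (coshB * prodB))
      (fun x hx => hx.2)
  -- measurability of F
  have hFmeas : AEStronglyMeasurable
      (fun x : EuclideanSpace ℝ (Fin n) =>
        (Real.cosh (⟪α, x⟫ / 2) / Real.sinh (⟪α, x⟫ / 2)) * δ x)
      (volume.restrict {x : EuclideanSpace ℝ (Fin n) |
        (∀ β ∈ Rplus, 0 ≤ ⟪β, x⟫) ∧ ‖x‖ ≤ A}) := by
    apply Measurable.aestronglyMeasurable
    have hinner : ∀ β : EuclideanSpace ℝ (Fin n),
        Measurable fun x : EuclideanSpace ℝ (Fin n) => (⟪β, x⟫ : ℝ) := fun β =>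
      Continuous.measurable (continuous_const.inner continuous_id)
    refine Measurable.mul ?_ ?_
    · exact (Real.continuous_cosh.measurable.comp ((hinner α).div_const 2)).div
        (Real.continuous_sinh.measurable.comp ((hinner α).div_const 2))
    · have : δ = fun x => ∏ β ∈ Rplus, |Real.sinh (⟪β, x⟫ / 2)| ^ (2 * k β) := funext hδ
      rw [this]
      refine Finset.measurable_prod _ fun β _ => ?_
      exact measurable_rpow_const'
        ((Real.continuous_sinh.measurable.comp ((hinner β).div_const 2)).abs)
        (fun _ => abs_nonneg _) _
  -- the pointwise bound
  have hbound : ∀ᵐ x ∂(volume.restrict {x : EuclideanSpace ℝ (Fin n) |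
      (∀ β ∈ Rplus, 0 ≤ ⟪β, x⟫) ∧ ‖x‖ ≤ A}),
      ‖(Real.cosh (⟪α, x⟫ / 2) / Real.sinh (⟪α, x⟫ / 2)) * δ x‖
        ≤ ‖coshB * prodB * |Real.sinh (⟪α, x⟫ / 2)| ^ q‖ := by
    refine (ae_restrict_iff' hSmeas).2 (ae_of_all _ fun x hx => ?_)
    obtain ⟨-, hxA⟩ := hx
    set S : ℝ := ⟪α, x⟫ / 2 with hS_def
    have hb : ∀ β ∈ Rplus, |Real.sinh (⟪β, x⟫ / 2)| ≤ Real.sinh (‖β‖ * A / 2) := by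
      intro β _
      rw [Real.abs_sinh]
      apply Real.sinh_le_sinh.2
      rw [abs_div, abs_two]
      have h1 : |(⟪β, x⟫ : ℝ)| ≤ ‖β‖ * ‖x‖ := abs_real_inner_le_norm β x
      have h2 : ‖β‖ * ‖x‖ ≤ ‖β‖ * A := by
        apply mul_le_mul_of_nonneg_left hxA (norm_nonneg β)
      linarith
    have hRHSnn : 0 ≤ coshB * prodB * |Real.sinh S| ^ q :=
      mul_nonneg (mul_nonneg hcoshB_pos.le hprodB_nonneg) (Real.rpow_nonneg (abs_nonneg _) _)
    rw [Real.norm_eq_abs, Real.norm_eq_abs, abs_of_nonneg hRHSnn]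
    rcases eq_or_ne (Real.sinh S) 0 with h0 | h0
    · have hz : Real.cosh S / Real.sinh S * δ x = 0 := by rw [h0, div_zero, zero_mul]
      rw [hz, abs_zero]
      exact hRHSnn
    have habs : 0 < |Real.sinh S| := abs_pos.2 h0
    have hδnn : 0 ≤ δ x := by
      rw [hδ]
      exact Finset.prod_nonneg fun β _ => Real.rpow_nonneg (abs_nonneg _) _
    have hsplit : δ x = |Real.sinh S| ^ (2 * k α) *
        ∏ β ∈ Rplus.erase α, |Real.sinh (⟪β, x⟫ / 2)| ^ (2 * k β) := by
      rw [hδ, ← Finset.mul_prod_erase Rplus _ hα]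
    have hstep : |Real.cosh S / Real.sinh S * δ x|
        = Real.cosh S * |Real.sinh S| ^ q *
          ∏ β ∈ Rplus.erase α, |Real.sinh (⟪β, x⟫ / 2)| ^ (2 * k β) := by
      rw [abs_mul, abs_div, abs_of_pos (Real.cosh_pos (x := S)), abs_of_nonneg hδnn, hsplit,
        hq_def, Real.rpow_sub habs, Real.rpow_one]
      field_simp
    rw [hstep]
    have hP : (∏ β ∈ Rplus.erase α, |Real.sinh (⟪β, x⟫ / 2)| ^ (2 * k β)) ≤ prodB := by
      rw [hprodB_def]
      refine Finset.prod_le_prod (fun β _ => Real.rpow_nonneg (abs_nonneg _) _) fun β hβ => ?_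
      exact Real.rpow_le_rpow (abs_nonneg _) (hb β (Finset.mem_of_mem_erase hβ))
        (le_of_lt (by have := hk β (Finset.mem_of_mem_erase hβ); linarith))
    have hcosh : Real.cosh S ≤ coshB := by
      rw [hcoshB_def]
      apply Real.cosh_le_cosh.2
      rw [hS_def, abs_div, abs_two, abs_of_nonneg (by positivity : (0:ℝ) ≤ ‖α‖ * A / 2)]
      have h1 : |(⟪α, x⟫ : ℝ)| ≤ ‖α‖ * ‖x‖ := abs_real_inner_le_norm α x
      have h2 : ‖α‖ * ‖x‖ ≤ ‖α‖ * A := mul_le_mul_of_nonneg_left hxA (norm_nonneg α)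
      linarith
    calc Real.cosh S * |Real.sinh S| ^ q *
          ∏ β ∈ Rplus.erase α, |Real.sinh (⟪β, x⟫ / 2)| ^ (2 * k β)
        ≤ coshB * |Real.sinh S| ^ q * prodB := by
          apply mul_le_mul
          · exact mul_le_mul_of_nonneg_right hcosh (Real.rpow_nonneg (abs_nonneg _) _)
          · exact hP
          · exact Finset.prod_nonneg fun β _ => Real.rpow_nonneg (abs_nonneg _) _
          · positivity
      _ = coshB * prodB * |Real.sinh S| ^ q := by ring

  exact Integrable.mono hint hFmeas hbound
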